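/- Forward error of the Horner evaluation of the rounded sum of two polynomials (Lemma 1, part (i)): Let u be a real number with 0 < u, let n be a positive integer with (2n+1)·u < 1, and let x, a_0, …, a_n, b_0, …, b_n be real numbers. Suppose c_i = (a_i + b_i)·(1+μ_i) with |μ_i| ≤ u for every i = 0, …, n, and suppose r_0, …, r_n are real numbers with r_n = c_n and, for every i = n−1, …, 0, r_i = (r_{i+1}·x·(1+ε_i) + c_i)·(1+δ_i) for some ε_i, δ_i with |ε_i| ≤ u and |δ_i| ≤ u. Then |r_0 − Σ_{i=0}^n (a_i + b_i) x^i| ≤ γ_{2n+1} · Σ_{i=0}^n |a_i + b_i| |x|^i. -/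

import Mathlib

lemma gamma_step_aux (u m : ℝ) (hu : 0 < u) (hm : 0 ≤ m) (h : (m + 2) * u < 1) :
    (1 + m * u / (1 - m * u)) * (1 + u) ^ 2 - 1 ≤ (m + 2) * u / (1 - (m + 2) * u) := by
  have h1 : 0 < 1 - m * u := by nlinarith
  have h2 : 0 < 1 - (m + 2) * u := by linarith
  have e : (1 + m * u / (1 - m * u)) * (1 + u) ^ 2 - 1
      = ((1 + u) ^ 2 - (1 - m * u)) / (1 - m * u) := by
    field_simp
    ring
  rw [e, div_le_div_iff₀ h1 h2]
  nlinarith [mul_nonneg hm (sq_nonneg u), mul_nonneg hm (mul_nonneg hu.le (sq_nonneg u)),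
    sq_nonneg u, pow_nonneg hu.le 3]

lemma horner_step_aux (u g G : ℝ) (hu : 0 < u) (hg0 : 0 ≤ g)
    (hGstep : (1 + g) * (1 + u) ^ 2 - 1 ≤ G)
    (x p q A rr e d m : ℝ) (he : |e| ≤ u) (hd : |d| ≤ u) (hm : |m| ≤ u)
    (hq0 : 0 ≤ q) (hpq : |p| ≤ q) (hIH : |rr - p| ≤ g * q) :
    |(rr * x * (1 + e) + A * (1 + m)) * (1 + d) - (A + x * p)| ≤ G * (|A| + |x| * q) := by
  have hG0 : (1 + u) ^ 2 - 1 ≤ G := by nlinarith [sq_nonneg (1 + u)]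
  have hexp : (rr * x * (1 + e) + A * (1 + m)) * (1 + d) - (A + x * p)
      = (rr - p) * x * ((1 + e) * (1 + d))
        + x * p * ((1 + e) * (1 + d) - 1)
        + A * ((1 + m) * (1 + d) - 1) := by ring
  have habs1 : ∀ y : ℝ, |y| ≤ u → |1 + y| ≤ 1 + u := by
    intro y hy
    refine (abs_add_le _ _).trans ?_
    rw [abs_one]; linarith
  have hb1 : |(1 + e) * (1 + d)| ≤ (1 + u) ^ 2 := by
    rw [abs_mul, sq]
    exact mul_le_mul (habs1 e he) (habs1 d hd) (abs_nonneg _) (by linarith)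
  have prod_sub_one : ∀ y z : ℝ, |y| ≤ u → |z| ≤ u →
      |(1 + y) * (1 + z) - 1| ≤ (1 + u) ^ 2 - 1 := by
    intro y z hy hz
    have h1 : (1 + y) * (1 + z) - 1 = y + z + y * z := by ring
    rw [h1]
    have h2 : |y + z + y * z| ≤ |y + z| + |y * z| := abs_add_le _ _
    have h3 : |y * z| ≤ u * u := by
      rw [abs_mul]; exact mul_le_mul hy hz (abs_nonneg _) hu.le
    have h4 : |y + z| ≤ u + u := (abs_add_le _ _).trans (by linarith)
    nlinarith
  have hb2 := prod_sub_one _ _ he hd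
  have hb3 := prod_sub_one _ _ hm hd
  have hx0 : (0 : ℝ) ≤ |x| := abs_nonneg _
  have hA0 : (0 : ℝ) ≤ |A| := abs_nonneg _
  have hu2 : (0 : ℝ) ≤ (1 + u) ^ 2 - 1 := by nlinarith
  calc |(rr * x * (1 + e) + A * (1 + m)) * (1 + d) - (A + x * p)|
      ≤ |(rr - p) * x * ((1 + e) * (1 + d))|
        + |x * p * ((1 + e) * (1 + d) - 1)|
        + |A * ((1 + m) * (1 + d) - 1)| := by
        rw [hexp]
        have t1 := abs_add_le ((rr - p) * x * ((1 + e) * (1 + d)) + x * p * ((1 + e) * (1 + d) - 1)) (A * ((1 + m) * (1 + d) - 1))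
        have t2 := abs_add_le ((rr - p) * x * ((1 + e) * (1 + d))) (x * p * ((1 + e) * (1 + d) - 1))
        linarith
    _ = |rr - p| * |x| * |(1 + e) * (1 + d)|
        + |x| * |p| * |(1 + e) * (1 + d) - 1|
        + |A| * |(1 + m) * (1 + d) - 1| := by
        rw [abs_mul ((rr - p) * x), abs_mul (rr - p) x, abs_mul (x * p),
          abs_mul x p, abs_mul A]
    _ ≤ (g * q) * |x| * (1 + u) ^ 2 + |x| * q * ((1 + u) ^ 2 - 1)
        + |A| * ((1 + u) ^ 2 - 1) := by
        have t1 : |rr - p| * |x| * |(1 + e) * (1 + d)| ≤ (g * q) * |x| * (1 + u) ^ 2 := by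
          have h1 : |rr - p| * |x| ≤ (g * q) * |x| :=
            mul_le_mul_of_nonneg_right hIH hx0
          have h2 : 0 ≤ |rr - p| * |x| := by positivity
          calc |rr - p| * |x| * |(1 + e) * (1 + d)| ≤ |rr - p| * |x| * (1 + u) ^ 2 :=
                mul_le_mul_of_nonneg_left hb1 h2
            _ ≤ (g * q) * |x| * (1 + u) ^ 2 := by
                apply mul_le_mul_of_nonneg_right h1; positivity
        have t2 : |x| * |p| * |(1 + e) * (1 + d) - 1| ≤ |x| * q * ((1 + u) ^ 2 - 1) := by
          apply mul_le_mul
          · exact mul_le_mul_of_nonneg_left hpq hx0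
          · exact hb2
          · exact abs_nonneg _
          · positivity
        have t3 : |A| * |(1 + m) * (1 + d) - 1| ≤ |A| * ((1 + u) ^ 2 - 1) :=
          mul_le_mul_of_nonneg_left hb3 hA0
        linarith
    _ = ((1 + g) * (1 + u) ^ 2 - 1) * (|x| * q) + ((1 + u) ^ 2 - 1) * |A| := by ring
    _ ≤ G * (|x| * q) + G * |A| := by
        have : 0 ≤ |x| * q := mul_nonneg hx0 hq0
        have h1 : ((1 + g) * (1 + u) ^ 2 - 1) * (|x| * q) ≤ G * (|x| * q) :=
          mul_le_mul_of_nonneg_right hGstep this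
        have h2 : ((1 + u) ^ 2 - 1) * |A| ≤ G * |A| :=
          mul_le_mul_of_nonneg_right hG0 hA0
        linarith
    _ = G * (|A| + |x| * q) := by ring

theorem horner_sum_forward_error
    (u : ℝ) (hu : 0 < u) (n : ℕ) (hn : 1 ≤ n)
    (h2nu : (2 * (n : ℝ) + 1) * u < 1)
    (x : ℝ) (a b c r ε δ μ : ℕ → ℝ)
    (hμu : ∀ i ≤ n, |μ i| ≤ u)
    (hc : ∀ i ≤ n, c i = (a i + b i) * (1 + μ i))
    (hεu : ∀ i < n, |ε i| ≤ u) (hδu : ∀ i < n, |δ i| ≤ u)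
    (hrn : r n = c n)
    (hrec : ∀ i < n, r i = (r (i + 1) * x * (1 + ε i) + c i) * (1 + δ i)) :
    |r 0 - ∑ i ∈ Finset.range (n + 1), (a i + b i) * x ^ i| ≤
      ((2 * (n : ℝ) + 1) * u / (1 - (2 * (n : ℝ) + 1) * u)) *
        ∑ i ∈ Finset.range (n + 1), |a i + b i| * |x| ^ i := by
  have hcast : (1 : ℝ) ≤ (n : ℝ) := by exact_mod_cast hn
  have hun : 3 * u < 1 := by nlinarith
  have key : ∀ k, k ≤ n →
      |r (n - k) - ∑ j ∈ Finset.range (k + 1), (a (n - k + j) + b (n - k + j)) * x ^ j| ≤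
        ((2 * (k : ℝ) + 1) * u / (1 - (2 * (k : ℝ) + 1) * u)) *
          ∑ j ∈ Finset.range (k + 1), |a (n - k + j) + b (n - k + j)| * |x| ^ j := by
    intro k
    induction k with
    | zero =>
      intro _
      simp only [Nat.sub_zero, Finset.sum_range_one, pow_zero, mul_one, Nat.add_zero,
        Nat.cast_zero, mul_zero, zero_add, one_mul]
      rw [hrn, hc n le_rfl]
      have h1 : |(a n + b n) * (1 + μ n) - (a n + b n)| = |a n + b n| * |μ n| := by
        rw [← abs_mul]; ring_nf
      rw [h1]
      have hμ := hμu n le_rfl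
      have h1u : 0 < 1 - u := by linarith
      have h2 : u ≤ u / (1 - u) := by
        rw [le_div_iff₀ h1u]; nlinarith
      calc |a n + b n| * |μ n| ≤ |a n + b n| * u :=
            mul_le_mul_of_nonneg_left hμ (abs_nonneg _)
        _ ≤ u / (1 - u) * |a n + b n| := by
            rw [mul_comm]; exact mul_le_mul_of_nonneg_right h2 (abs_nonneg _)
    | succ k ih =>
      intro hk1
      have hk : k ≤ n := Nat.le_of_succ_le hk1
      have IH := ih hk
      have hi : n - (k + 1) < n := by omega
      have hsucc : n - (k + 1) + 1 = n - k := by omega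
      have hidx : ∀ j : ℕ, n - (k + 1) + (j + 1) = n - k + j := by omega
      set i := n - (k + 1) with hidef
      have hsum1 : ∑ j ∈ Finset.range (k + 1 + 1), (a (i + j) + b (i + j)) * x ^ j
          = (a i + b i) + x * ∑ j ∈ Finset.range (k + 1), (a (n - k + j) + b (n - k + j)) * x ^ j := by
        rw [Finset.sum_range_succ']
        simp only [hidx, Nat.add_zero, pow_zero, mul_one]
        rw [add_comm, Finset.mul_sum]
        congr 1
        apply Finset.sum_congr rfl
        intro j _
        rw [pow_succ]; ring
      have hsum2 : ∑ j ∈ Finset.range (k + 1 + 1), |a (i + j) + b (i + j)| * |x| ^ j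
          = |a i + b i| + |x| * ∑ j ∈ Finset.range (k + 1), |a (n - k + j) + b (n - k + j)| * |x| ^ j := by
        rw [Finset.sum_range_succ']
        simp only [hidx, Nat.add_zero, pow_zero, mul_one]
        rw [add_comm, Finset.mul_sum]
        congr 1
        apply Finset.sum_congr rfl
        intro j _
        rw [pow_succ]; ring
      rw [hsum1, hsum2]
      -- gamma facts
      have hmu2 : ((2 * (k : ℝ) + 1) + 2) * u < 1 := by
        have hkn : ((k : ℝ) + 1) ≤ (n : ℝ) := by exact_mod_cast hk1
        nlinarith
      have hmu1 : (2 * (k : ℝ) + 1) * u < 1 := by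
        have : (0 : ℝ) ≤ (k : ℝ) := Nat.cast_nonneg k
        nlinarith
      have hg0 : 0 ≤ (2 * (k : ℝ) + 1) * u / (1 - (2 * (k : ℝ) + 1) * u) := by
        apply div_nonneg
        · have : (0 : ℝ) ≤ (k : ℝ) := Nat.cast_nonneg k
          positivity
        · linarith
      have hGstep := gamma_step_aux u (2 * (k : ℝ) + 1) hu
        (by positivity) hmu2
      have hGeq : ((2 * (k : ℝ) + 1) + 2) * u / (1 - ((2 * (k : ℝ) + 1) + 2) * u)
          = (2 * ((k + 1 : ℕ) : ℝ) + 1) * u / (1 - (2 * ((k + 1 : ℕ) : ℝ) + 1) * u) := by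
        push_cast; ring_nf
      -- sum nonnegativity and |p| ≤ q
      have hq0 : 0 ≤ ∑ j ∈ Finset.range (k + 1), |a (n - k + j) + b (n - k + j)| * |x| ^ j := by
        apply Finset.sum_nonneg; intro j _; positivity
      have hpq : |∑ j ∈ Finset.range (k + 1), (a (n - k + j) + b (n - k + j)) * x ^ j|
          ≤ ∑ j ∈ Finset.range (k + 1), |a (n - k + j) + b (n - k + j)| * |x| ^ j := by
        refine (Finset.abs_sum_le_sum_abs _ _).trans ?_
        apply Finset.sum_le_sum
        intro j _
        rw [abs_mul, abs_pow]
      have hIH' : |r (i + 1) - ∑ j ∈ Finset.range (k + 1), (a (n - k + j) + b (n - k + j)) * x ^ j|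
          ≤ (2 * (k : ℝ) + 1) * u / (1 - (2 * (k : ℝ) + 1) * u) *
            ∑ j ∈ Finset.range (k + 1), |a (n - k + j) + b (n - k + j)| * |x| ^ j := by
        rw [hsucc]; exact IH
      rw [hrec i hi, hc i hi.le]
      rw [← hGeq]
      exact horner_step_aux u _ _ hu hg0 hGstep x _ _ _ _ _ _ _
        (hεu i hi) (hδu i hi) (hμu i hi.le) hq0 hpq hIH'
  have := key n le_rfl
  simpa using this
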